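/- Let Σ : ℝ^d → ℝ be concave and differentiable with gradient s = ∇Σ, and let M ∈ ℝ^{p×d}. Define the controller vector field φ(η, v) = s(η) + Mᵀv with output ψ(η) = Mη. Then for all η, η' ∈ ℝ^d and all inputs v, v' ∈ ℝ^p, the storage function W(η, η') = ½‖η − η'‖² satisfies ⟨η − η', φ(η, v) − φ(η', v')⟩ ≤ ⟨Mη − Mη', v − v'⟩. In other words, the internal-model controller η̇ = s(η) + Mᵀv, λ = Mη is incrementally passive. -/

import Mathlib

open scoped RealInnerProductSpace

lemma gradient_monotone_of_concave
    {d : ℕ} (Sig : EuclideanSpace ℝ (Fin d) → ℝ)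
    (s : EuclideanSpace ℝ (Fin d) → EuclideanSpace ℝ (Fin d))
    (hconc : ConcaveOn ℝ Set.univ Sig)
    (hgrad : ∀ η, HasGradientAt Sig (s η) η)
    (η η' : EuclideanSpace ℝ (Fin d)) :
    ⟪η - η', s η - s η'⟫ ≤ 0 := by
  set u := η - η' with hu
  -- g(t) = -Sig(η' + t • u) is convex on ℝ
  set g : ℝ → ℝ := fun t => -Sig (η' + t • u) with hg
  have hgconv : ConvexOn ℝ Set.univ g := by
    have := hconc.neg
    exact (this.comp_affineMap
      (AffineMap.mk (fun t : ℝ => η' + t • u)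
        { toFun := fun t : ℝ => t • u
          map_add' := by intro a b; simp [add_smul]
          map_smul' := by intro a b; simp [smul_smul] }
        (by intro p v; simp [add_smul]; abel))).subset
      (by intro x _; trivial) convex_univ
  -- derivative of g at t is -⟪s (η' + t•u), u⟫
  have hderiv : ∀ t : ℝ, HasDerivAt g (-⟪s (η' + t • u), u⟫) t := by
    intro t
    have hline : HasDerivAt (fun t : ℝ => η' + t • u) u t := by
      simpa using ((hasDerivAt_id t).smul_const u).const_add η'
    have := ((hgrad (η' + t • u)).hasFDerivAt.comp_hasDerivAt t hline).neg
    simp [hg] at this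
    exact this
  have h0 : (1 : ℝ) ∈ (Set.univ : Set ℝ) := trivial
  have h1 : -⟪s (η' + (0:ℝ) • u), u⟫ ≤ slope g 0 1 :=
    hgconv.le_slope_of_hasDerivAt trivial trivial one_pos (hderiv 0)
  have h2 : slope g 0 1 ≤ -⟪s (η' + (1:ℝ) • u), u⟫ :=
    hgconv.slope_le_of_hasDerivAt trivial trivial one_pos (hderiv 1)
  have key : -⟪s η', u⟫ ≤ -⟪s η, u⟫ := by
    have := h1.trans h2
    simpa [hu] using this
  have : ⟪s η - s η', u⟫ ≤ 0 := by
    rw [inner_sub_left]; linarith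
  rw [real_inner_comm] at this
  exact this

/-- The internal-model controller `η̇ = s(η) + Mᵀv`, `λ = Mη`, with `s = ∇Σ`
the gradient of a concave differentiable function, is incrementally passive:
with storage `W(η,η') = ½‖η − η'‖²`, its derivative along the two vector fields,
`⟨η − η', φ(η,v) − φ(η',v')⟩`, is bounded by `⟨Mη − Mη', v − v'⟩`. -/
theorem internal_model_controller_incrementally_passive
    (d p : ℕ)
    (Sig : EuclideanSpace ℝ (Fin d) → ℝ)
    (s : EuclideanSpace ℝ (Fin d) → EuclideanSpace ℝ (Fin d))
    (hconc : ConcaveOn ℝ Set.univ Sig)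
    (hgrad : ∀ η, HasGradientAt Sig (s η) η)
    (M : Matrix (Fin p) (Fin d) ℝ) :
    ∀ (η η' : EuclideanSpace ℝ (Fin d)) (v v' : EuclideanSpace ℝ (Fin p)),
      ⟪η - η', (s η + Matrix.toEuclideanLin M.transpose v)
          - (s η' + Matrix.toEuclideanLin M.transpose v')⟫
        ≤ ⟪Matrix.toEuclideanLin M η - Matrix.toEuclideanLin M η', v - v'⟫ := by
  intro η η' v v'
  have hmono := gradient_monotone_of_concave Sig s hconc hgrad η η'
  have hT : Matrix.toEuclideanLin M.transpose
      = LinearMap.adjoint (Matrix.toEuclideanLin M) := by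
    rw [← Matrix.toEuclideanLin_conjTranspose_eq_adjoint]
    congr 1
  have hadj : ⟪η - η', Matrix.toEuclideanLin M.transpose v
        - Matrix.toEuclideanLin M.transpose v'⟫
      = ⟪Matrix.toEuclideanLin M η - Matrix.toEuclideanLin M η', v - v'⟫ := by
    rw [hT, ← map_sub, LinearMap.adjoint_inner_right, ← map_sub]
  have expand : ⟪η - η', (s η + Matrix.toEuclideanLin M.transpose v)
          - (s η' + Matrix.toEuclideanLin M.transpose v')⟫
      = ⟪η - η', s η - s η'⟫
        + ⟪η - η', Matrix.toEuclideanLin M.transpose v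
            - Matrix.toEuclideanLin M.transpose v'⟫ := by
    rw [← inner_add_right]; congr 1; abel
  rw [expand, hadj]
  linarith
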